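/- Let f : ℝ² → ℝ² be given by f(x,y) = (x, y³ + x·y). Then the vector field η(X,Y) = (9Y², -2X²Y) is liftable over f, with lift ξ(x,y) = (9(y³+xy)², -y(y²+x)(2x+3y²)): for all (x,y), Df(x,y)·ξ(x,y) = η(f(x,y)). -/

import Mathlib

lemma hasFDeriv4 (p : ℝ × ℝ) :
    HasFDerivAt (fun q : ℝ × ℝ => (q.1, q.2 ^ 3 + q.1 * q.2))
      ((ContinuousLinearMap.fst ℝ ℝ ℝ).prod
        (((3 * p.2 ^ 2) • ContinuousLinearMap.snd ℝ ℝ ℝ) +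
          (p.1 • ContinuousLinearMap.snd ℝ ℝ ℝ + p.2 • ContinuousLinearMap.fst ℝ ℝ ℝ))) p := by
  have h1 : HasFDerivAt (fun q : ℝ × ℝ => q.1) (ContinuousLinearMap.fst ℝ ℝ ℝ) p :=
    hasFDerivAt_fst
  have h2 : HasFDerivAt (fun q : ℝ × ℝ => q.2) (ContinuousLinearMap.snd ℝ ℝ ℝ) p :=
    hasFDerivAt_snd
  have hcube : HasFDerivAt (fun q : ℝ × ℝ => q.2 ^ 3)
      ((3 * p.2 ^ 2) • ContinuousLinearMap.snd ℝ ℝ ℝ) p := by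
    have h := (h2.mul h2).mul h2
    have hf : (((fun q : ℝ × ℝ => q.2) * fun q : ℝ × ℝ => q.2) * fun q : ℝ × ℝ => q.2) = fun q : ℝ × ℝ => q.2 ^ 3 := by
      funext q; simp only [Pi.mul_apply]; ring
    rw [hf] at h
    refine h.congr_fderiv ?_
    apply ContinuousLinearMap.ext
    intro v
    simp
    ring
  have hmul : HasFDerivAt (fun q : ℝ × ℝ => q.1 * q.2)
      (p.1 • ContinuousLinearMap.snd ℝ ℝ ℝ + p.2 • ContinuousLinearMap.fst ℝ ℝ ℝ) p :=
    h1.mul h2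
  exact h1.prodMk (hcube.add hmul)

/-- η(X,Y) = (9Y², -2X²Y) is liftable over f(x,y) = (x, y³ + xy) with lift
ξ(x,y) = (9(y³+xy)², -y(y²+x)(2x+3y²)): Df·ξ = η∘f pointwise. -/
theorem stmt4 :
    ∀ p : ℝ × ℝ,
      fderiv ℝ (fun q : ℝ × ℝ => (q.1, q.2 ^ 3 + q.1 * q.2)) p
          (9 * (p.2 ^ 3 + p.1 * p.2) ^ 2,
            -(p.2 * (p.2 ^ 2 + p.1) * (2 * p.1 + 3 * p.2 ^ 2)))
        = (9 * (p.2 ^ 3 + p.1 * p.2) ^ 2,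
            -(2 * p.1 ^ 2 * (p.2 ^ 3 + p.1 * p.2))) := by
  intro p
  rw [(hasFDeriv4 p).fderiv]
  simp [ContinuousLinearMap.prod_apply, Prod.ext_iff]
  ring
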